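/- Let f : ℝⁿ → ℝ be a bounded Borel measurable function with ∫_{ℝⁿ} f(x)² dx < ∞ and ‖f‖₂ > 0, and let G : ℝ → ℝ be differentiable with ν ≤ G'(s) ≤ 1/ν for all s ∈ [−‖f‖_∞, ‖f‖_∞], where ν > 0. For a Borel probability measure m on ℝⁿ define F(x,m) := f(x)·G(∫_{ℝⁿ} f dm). Then for all Borel probability measures m₁, m₂ on ℝⁿ: ∫_{ℝⁿ} (F(x,m₁) − F(x,m₂)) dm₁(x) − ∫_{ℝⁿ} (F(x,m₁) − F(x,m₂)) dm₂(x) ≥ (ν/‖f‖₂²) · ∫_{ℝⁿ} (F(x,m₁) − F(x,m₂))² dx. -/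

import Mathlib

noncomputable section

open MeasureTheory

abbrev Euc (n : ℕ) := EuclideanSpace ℝ (Fin n)

/-- The coupling `F(x,m) = f(x) · G(∫ f dm)`. -/
def coupling {n : ℕ} (f : Euc n → ℝ) (G : ℝ → ℝ) (m : Measure (Euc n)) (x : Euc n) : ℝ :=
  f x * G (∫ y, f y ∂m)

/-- the monotonicity estimate (F3) for couplings `F(x,m) = f(x) G(∫ f dm)`:
`∫ (F(·,m₁) − F(·,m₂)) d(m₁ − m₂) ≥ (ν/‖f‖₂²) ∫ (F(·,m₁) − F(·,m₂))² dx`,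
where `ν ≤ G' ≤ 1/ν` on `[−‖f‖_∞, ‖f‖_∞]` and `‖f‖_∞ = ⨆ x, |f x|`. -/
theorem stmt7 (n : ℕ) (f : Euc n → ℝ) (G : ℝ → ℝ) (ν : ℝ) (hν : 0 < ν)
    (hfmeas : Measurable f) (hfbdd : ∃ M : ℝ, ∀ x, |f x| ≤ M)
    (hf2 : Integrable (fun x => (f x) ^ 2))
    (hf2pos : 0 < ∫ x, (f x) ^ 2)
    (hG : Differentiable ℝ G)
    (hG' : ∀ s ∈ Set.Icc (-(⨆ x, |f x|)) (⨆ x, |f x|),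
      ν ≤ deriv G s ∧ deriv G s ≤ 1 / ν)
    (m₁ m₂ : Measure (Euc n))
    [IsProbabilityMeasure m₁] [IsProbabilityMeasure m₂] :
    (ν / ∫ x, (f x) ^ 2) * ∫ x, (coupling f G m₁ x - coupling f G m₂ x) ^ 2
      ≤ (∫ x, (coupling f G m₁ x - coupling f G m₂ x) ∂m₁)
        - ∫ x, (coupling f G m₁ x - coupling f G m₂ x) ∂m₂ := by

  obtain ⟨M₀, hM₀⟩ := hfbdd
  set M := ⨆ x, |f x| with hMdef
  have hbdd : BddAbove (Set.range fun x => |f x|) := ⟨M₀, by rintro _ ⟨x, rfl⟩; exact hM₀ x⟩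
  have hM : ∀ x, |f x| ≤ M := fun x => le_ciSup hbdd x
  have hMnn : 0 ≤ M := le_trans (abs_nonneg _) (hM 0)
  have hint : ∀ (m : Measure (Euc n)), IsProbabilityMeasure m → Integrable f m := by
    intro m hm
    exact (integrable_const M).mono' hfmeas.aestronglyMeasurable
      (Filter.Eventually.of_forall fun x => by simpa using hM x)
  have hmem : ∀ (m : Measure (Euc n)), IsProbabilityMeasure m →
      (∫ y, f y ∂m) ∈ Set.Icc (-M) M := by
    intro m hm
    have : ‖∫ y, f y ∂m‖ ≤ M * (m Set.univ).toReal :=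
      norm_integral_le_of_norm_le_const (Filter.Eventually.of_forall fun x => by simpa using hM x)
    simp [measure_univ] at this
    constructor <;> [linarith [neg_abs_le (∫ y, f y ∂m)]; linarith [le_abs_self (∫ y, f y ∂m)]]
  set a := ∫ y, f y ∂m₁ with ha
  set b := ∫ y, f y ∂m₂ with hb
  have haI := hmem m₁ inferInstance
  have hbI := hmem m₂ inferInstance
  set g := G a - G b with hg
  -- MVT: get c with g = deriv G c * (a - b)
  have hmvt : ∃ c ∈ Set.Icc (-M) M, g = deriv G c * (a - b) := by
    rcases lt_trichotomy a b with h | h | h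
    · obtain ⟨c, hc, hceq⟩ := exists_deriv_eq_slope G h (hG.continuous.continuousOn)
        (fun x _ => hG.differentiableAt.differentiableWithinAt)
      refine ⟨c, ⟨le_trans haI.1 hc.1.le, le_trans hc.2.le hbI.2⟩, ?_⟩
      rw [hceq, div_mul_eq_mul_div, eq_div_iff (sub_ne_zero.mpr h.ne')]; ring
    · exact ⟨a, haI, by simp [hg, h]⟩
    · obtain ⟨c, hc, hceq⟩ := exists_deriv_eq_slope G h (hG.continuous.continuousOn)
        (fun x _ => hG.differentiableAt.differentiableWithinAt)
      refine ⟨c, ⟨le_trans hbI.1 hc.1.le, le_trans hc.2.le haI.2⟩, ?_⟩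
      rw [hceq, div_mul_cancel₀ _ (sub_ne_zero.mpr h.ne')]
  obtain ⟨c, hcmem, hceq⟩ := hmvt
  obtain ⟨hc1, hc2⟩ := hG' c hcmem
  have hdiff : ∀ x, coupling f G m₁ x - coupling f G m₂ x = f x * g := by
    intro x; simp only [coupling, hg, ← ha, ← hb]; ring
  have e1 : ∫ x, (coupling f G m₁ x - coupling f G m₂ x) ^ 2
      = (∫ x, (f x) ^ 2) * g ^ 2 := by
    simp_rw [hdiff, mul_pow]
    exact integral_mul_const _ _
  have e2 : ∫ x, (coupling f G m₁ x - coupling f G m₂ x) ∂m₁ = a * g := by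
    simp_rw [hdiff]; rw [integral_mul_const, ← ha]
  have e3 : ∫ x, (coupling f G m₁ x - coupling f G m₂ x) ∂m₂ = b * g := by
    simp_rw [hdiff]; rw [integral_mul_const, ← hb]
  rw [e1, e2, e3]
  have hI := hf2pos.ne'
  have lhs_eq : (ν / ∫ x, (f x) ^ 2) * ((∫ x, (f x) ^ 2) * g ^ 2) = ν * g ^ 2 := by
    field_simp
  rw [lhs_eq]
  have : a * g - b * g = deriv G c * (a - b) ^ 2 := by rw [hceq]; ring
  rw [this, hceq]
  have hd : 0 < deriv G c := lt_of_lt_of_le hν hc1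
  have hν1 : ν * deriv G c ≤ 1 := by
    have := (le_div_iff₀ hν).mp hc2
    linarith [mul_comm ν (deriv G c)]
  nlinarith [sq_nonneg (a - b), sq_nonneg (deriv G c)]
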